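/- For every x ∈ (0,1), the non-local stabilizer 2-Rényi entropy of a single entangled pair of qubits with spectrum (x, 1−x), namely M₂(x) = −log(1 − 4x + 20x² − 32x³ + 16x⁴), is sandwiched between the two anti-flatness measures: x²(1−x)²·(log(x/(1−x)))² / (x² + (1−x)²)² ≤ −log(1 − 4x + 20x² − 32x³ + 16x⁴) ≤ x(1−x)·(log(x/(1−x)))². (In the paper's notation, −(1/2)·∂_n S̃_n|_{n=2} ≤ M₂ ≤ −∂_n S̃_n|_{n=1} for a pair of qubits with entanglement spectrum {x, 1−x}.) -/

import Mathlib

/-- Squares compare with `sinh`: `y ^ 2 ≤ sinh y ^ 2`. -/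
lemma sq_le_sinh_sq (y : ℝ) : y ^ 2 ≤ Real.sinh y ^ 2 := by
  rcases le_or_gt 0 y with h | h
  · have h1 : y ≤ Real.sinh y := Real.self_le_sinh_iff.2 h
    exact pow_le_pow_left₀ h h1 2
  · have h0 : 0 ≤ -y := by linarith
    have h1 : -y ≤ Real.sinh (-y) := Real.self_le_sinh_iff.2 h0
    rw [Real.sinh_neg] at h1
    have h2 := pow_le_pow_left₀ h0 h1 2
    nlinarith [h2]

/-- `(log t)² ≤ t + 1/t − 2` for `t > 0`. -/
lemma logsq_le (t : ℝ) (ht : 0 < t) : (Real.log t) ^ 2 ≤ t + 1 / t - 2 := by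
  set y := Real.log t with hy
  have ha : Real.exp (y / 2) * Real.exp (y / 2) = t := by
    rw [← Real.exp_add]
    norm_num
    exact Real.exp_log ht
  have hb : Real.exp (-(y / 2)) * Real.exp (-(y / 2)) = 1 / t := by
    rw [← Real.exp_add]
    have : -(y / 2) + -(y / 2) = -y := by ring
    rw [this, Real.exp_neg, Real.exp_log ht]
    exact (one_div t).symm
  have hab : Real.exp (y / 2) * Real.exp (-(y / 2)) = 1 := by
    rw [← Real.exp_add]; norm_num
  have e : t + 1 / t - 2 = (2 * Real.sinh (y / 2)) ^ 2 := by
    rw [Real.sinh_eq]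
    nlinarith [ha, hb, hab]
  rw [e]
  have := sq_le_sinh_sq (y / 2)
  nlinarith [this]

/-- `(q² − 1)/(2q) ≤ log q` for `0 < q ≤ 1`. -/
lemma log_lb (q : ℝ) (h0 : 0 < q) (h1 : q ≤ 1) : (q ^ 2 - 1) / (2 * q) ≤ Real.log q := by
  set y := Real.log q with hy
  have hyneg : y ≤ 0 := Real.log_nonpos h0.le h1
  have hsinh : Real.sinh y ≤ y := Real.sinh_le_self_iff.2 hyneg
  have e : Real.sinh y = (q ^ 2 - 1) / (2 * q) := by
    rw [Real.sinh_eq, Real.exp_log h0, Real.exp_neg, Real.exp_log h0]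
    field_simp
  linarith [e ▸ hsinh]

/-- `artanh` lower bound: `2s + (2/3)s³ ≤ log(1+s) − log(1−s)` for `s ∈ [0,1)`. -/
lemma artanh_lb (s : ℝ) (h0 : 0 ≤ s) (h1 : s < 1) :
    2 * s + 2 / 3 * s ^ 3 ≤ Real.log (1 + s) - Real.log (1 - s) := by
  set f : ℝ → ℝ := fun u => Real.log (1 + u) - Real.log (1 - u) - 2 * u - 2 / 3 * u ^ 3 with hf
  have hderiv : ∀ u ∈ Set.Ico (0 : ℝ) 1,
      HasDerivAt f (1 / (1 + u) + 1 / (1 - u) - 2 - 2 * u ^ 2) u := by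
    intro u hu
    obtain ⟨hu0, hu1⟩ := hu
    have hp1 : (0 : ℝ) < 1 + u := by linarith
    have hp2 : (0 : ℝ) < 1 - u := by linarith
    have h1' : HasDerivAt (fun u : ℝ => 1 + u) 1 u := by
      simpa using (hasDerivAt_id u).const_add 1
    have hlog1 : HasDerivAt (fun u : ℝ => Real.log (1 + u)) (1 / (1 + u)) u := by
      simpa using h1'.log (ne_of_gt hp1)
    have h2' : HasDerivAt (fun u : ℝ => 1 - u) (-1) u := by
      simpa using (hasDerivAt_id u).const_sub 1
    have hlog2 : HasDerivAt (fun u : ℝ => Real.log (1 - u)) (-1 / (1 - u)) u := by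
      simpa using h2'.log (ne_of_gt hp2)
    have h3 : HasDerivAt (fun u : ℝ => 2 * u) 2 u := by
      simpa using (hasDerivAt_id u).const_mul 2
    have h4 : HasDerivAt (fun u : ℝ => 2 / 3 * u ^ 3) (2 * u ^ 2) u := by
      have := (hasDerivAt_pow 3 u).const_mul (2 / 3 : ℝ)
      convert this using 1
      exacts [rfl, rfl, by push_cast; ring]
    have := ((hlog1.sub hlog2).sub h3).sub h4
    convert this using 1
    exacts [rfl, rfl, rfl, by ring]
  have hmono : MonotoneOn f (Set.Ico (0 : ℝ) 1) := by
    apply monotoneOn_of_deriv_nonneg (convex_Ico 0 1)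
    · intro u hu
      exact (hderiv u hu).continuousAt.continuousWithinAt
    · intro u hu
      rw [interior_Ico] at hu
      exact (hderiv u ⟨hu.1.le, hu.2⟩).differentiableAt.differentiableWithinAt
    · intro u hu
      rw [interior_Ico] at hu
      obtain ⟨hu0, hu1⟩ := hu
      rw [(hderiv u ⟨hu0.le, hu1⟩).deriv]
      have hp1 : (0 : ℝ) < 1 + u := by linarith
      have hp2 : (0 : ℝ) < 1 - u := by linarith
      have e : 1 / (1 + u) + 1 / (1 - u) - 2 - 2 * u ^ 2
          = 2 * u ^ 4 / ((1 + u) * (1 - u)) := by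
        field_simp
        ring
      rw [e]
      positivity
  have h00 : (0 : ℝ) ∈ Set.Ico (0 : ℝ) 1 := ⟨le_refl 0, by norm_num⟩
  have hss : s ∈ Set.Ico (0 : ℝ) 1 := ⟨h0, h1⟩
  have := hmono h00 hss h0
  have hf0 : f 0 = 0 := by simp [hf]
  rw [hf0] at this
  simp only [hf] at this
  linarith

/-- The key polynomial inequality for the upper bound. -/
lemma poly_key (x : ℝ) (h0 : 0 < x) (h1 : x < 1) :
    1 - (1 - 4 * x + 20 * x ^ 2 - 32 * x ^ 3 + 16 * x ^ 4) ^ 2 ≤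
      2 * (1 - 4 * x + 20 * x ^ 2 - 32 * x ^ 3 + 16 * x ^ 4) * (x * (1 - x)) *
        (4 * (1 - 2 * x) ^ 2 + 8 / 3 * (1 - 2 * x) ^ 4 + 4 / 9 * (1 - 2 * x) ^ 6) := by
  have hp : 0 ≤ x * (1 - x) := mul_nonneg h0.le (by linarith)
  have hp4 : x * (1 - x) ≤ 1 / 4 := by nlinarith [sq_nonneg (1 - 2 * x)]
  have hR : 0 ≤ 14 - 100 * (x * (1 - x)) + 256 * (x * (1 - x)) ^ 2 - 128 * (x * (1 - x)) ^ 3 := by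
    nlinarith [sq_nonneg (x * (1 - x) - 25 / 112),
      mul_nonneg (sq_nonneg (x * (1 - x))) (by linarith : (0 : ℝ) ≤ 1 / 4 - x * (1 - x))]
  nlinarith [mul_nonneg (mul_nonneg hp (sq_nonneg ((1 - 2 * x) ^ 2))) hR]

set_option maxHeartbeats 1000000 in
/-- For every `x ∈ (0,1)`, the non-local stabilizer 2-Rényi entropy of a
single entangled pair of qubits with spectrum `(x, 1−x)`, namely
`M₂(x) = −log(1 − 4x + 20x² − 32x³ + 16x⁴)`, is sandwiched between the two anti-flatness
measures:
`x²(1−x)²(log(x/(1−x)))²/(x²+(1−x)²)² ≤ M₂(x) ≤ x(1−x)(log(x/(1−x)))²`. -/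
theorem nonlocalMagic_pair_sandwich (x : ℝ) (hx0 : 0 < x) (hx1 : x < 1) :
    x ^ 2 * (1 - x) ^ 2 * (Real.log (x / (1 - x))) ^ 2 / (x ^ 2 + (1 - x) ^ 2) ^ 2 ≤
        -Real.log (1 - 4 * x + 20 * x ^ 2 - 32 * x ^ 3 + 16 * x ^ 4) ∧
      -Real.log (1 - 4 * x + 20 * x ^ 2 - 32 * x ^ 3 + 16 * x ^ 4) ≤
        x * (1 - x) * (Real.log (x / (1 - x))) ^ 2 := by
  have hx1' : (0 : ℝ) < 1 - x := by linarith
  set Q := 1 - 4 * x + 20 * x ^ 2 - 32 * x ^ 3 + 16 * x ^ 4 with hQdef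
  set L := Real.log (x / (1 - x)) with hLdef
  clear_value Q L
  have hL : L = Real.log x - Real.log (1 - x) := by
    rw [hLdef]; exact Real.log_div (ne_of_gt hx0) (ne_of_gt hx1')
  have hQ34 : 3 / 4 ≤ Q := by
    rw [hQdef]; nlinarith [sq_nonneg (1 / 2 - 4 * x + 4 * x ^ 2)]
  have hQpos : 0 < Q := by linarith
  have hQ1 : Q ≤ 1 := by
    rw [hQdef]
    nlinarith [mul_nonneg (mul_nonneg hx0.le hx1'.le) (sq_nonneg (1 - 2 * x))]
  have hpw : 0 < x * (1 - x) := mul_pos hx0 hx1'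
  constructor
  · -- lower bound
    have hlogle : Real.log Q ≤ Q - 1 := Real.log_le_sub_one_of_pos hQpos
    have hA : L ^ 2 ≤ x / (1 - x) + 1 / (x / (1 - x)) - 2 := by
      rw [hLdef]; exact logsq_le _ (div_pos hx0 hx1')
    have eA : x / (1 - x) + 1 / (x / (1 - x)) - 2 = (1 - 2 * x) ^ 2 / (x * (1 - x)) := by
      field_simp
      ring
    rw [eA] at hA
    have hA' : L ^ 2 * (x * (1 - x)) ≤ (1 - 2 * x) ^ 2 := (le_div_iff₀ hpw).1 hA
    rw [div_le_iff₀ (by positivity : (0 : ℝ) < (x ^ 2 + (1 - x) ^ 2) ^ 2)]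
    have hhalf : 1 / 2 ≤ x ^ 2 + (1 - x) ^ 2 := by nlinarith [sq_nonneg (1 - 2 * x)]
    have hD : 1 / 4 ≤ (x ^ 2 + (1 - x) ^ 2) ^ 2 := by nlinarith [hhalf]
    have c1 : x ^ 2 * (1 - x) ^ 2 * L ^ 2 ≤ x * (1 - x) * (1 - 2 * x) ^ 2 := by
      nlinarith [mul_le_mul_of_nonneg_left hA' hpw.le]
    have c2 : 1 - Q ≤ -Real.log Q := by linarith
    have c3 : x * (1 - x) * (1 - 2 * x) ^ 2 ≤ (1 - Q) * (x ^ 2 + (1 - x) ^ 2) ^ 2 := by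
      rw [hQdef]
      nlinarith [mul_nonneg (mul_nonneg hpw.le (sq_nonneg (1 - 2 * x)))
        (by linarith : (0 : ℝ) ≤ 4 * (x ^ 2 + (1 - x) ^ 2) ^ 2 - 1)]
    have c4 : (1 - Q) * (x ^ 2 + (1 - x) ^ 2) ^ 2 ≤
        (-Real.log Q) * (x ^ 2 + (1 - x) ^ 2) ^ 2 :=
      mul_le_mul_of_nonneg_right c2 (by positivity)
    linarith
  · -- upper bound
    have hB : (Q ^ 2 - 1) / (2 * Q) ≤ Real.log Q := log_lb Q hQpos hQ1
    have hC : 4 * (1 - 2 * x) ^ 2 + 8 / 3 * (1 - 2 * x) ^ 4 + 4 / 9 * (1 - 2 * x) ^ 6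
        ≤ L ^ 2 := by
      rcases le_total x (1 / 2) with hhalf | hhalf
      · have hs0 : 0 ≤ 1 - 2 * x := by linarith
        have hs1 : 1 - 2 * x < 1 := by linarith
        have h := artanh_lb (1 - 2 * x) hs0 hs1
        have e1 : Real.log (1 + (1 - 2 * x)) - Real.log (1 - (1 - 2 * x)) = -L := by
          rw [hL]
          have e2 : (1 : ℝ) + (1 - 2 * x) = 2 * (1 - x) := by ring
          have e3 : (1 : ℝ) - (1 - 2 * x) = 2 * x := by ring
          rw [e2, e3, Real.log_mul two_ne_zero (ne_of_gt hx1'),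
            Real.log_mul two_ne_zero (ne_of_gt hx0)]
          ring
        rw [e1] at h
        have h0 : 0 ≤ 2 * (1 - 2 * x) + 2 / 3 * (1 - 2 * x) ^ 3 := by
          have := pow_nonneg hs0 3; linarith
        have hsq := pow_le_pow_left₀ h0 h 2
        rw [neg_sq] at hsq
        have e4 : (2 * (1 - 2 * x) + 2 / 3 * (1 - 2 * x) ^ 3) ^ 2
            = 4 * (1 - 2 * x) ^ 2 + 8 / 3 * (1 - 2 * x) ^ 4 + 4 / 9 * (1 - 2 * x) ^ 6 := by
          ring
        linarith
      · have hs0 : 0 ≤ 2 * x - 1 := by linarith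
        have hs1 : 2 * x - 1 < 1 := by linarith
        have h := artanh_lb (2 * x - 1) hs0 hs1
        have e1 : Real.log (1 + (2 * x - 1)) - Real.log (1 - (2 * x - 1)) = L := by
          rw [hL]
          have e2 : (1 : ℝ) + (2 * x - 1) = 2 * x := by ring
          have e3 : (1 : ℝ) - (2 * x - 1) = 2 * (1 - x) := by ring
          rw [e2, e3, Real.log_mul two_ne_zero (ne_of_gt hx1'),
            Real.log_mul two_ne_zero (ne_of_gt hx0)]
          ring
        rw [e1] at h
        have h0 : 0 ≤ 2 * (2 * x - 1) + 2 / 3 * (2 * x - 1) ^ 3 := by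
          have := pow_nonneg hs0 3; linarith
        have hsq := pow_le_pow_left₀ h0 h 2
        have e4 : (2 * (2 * x - 1) + 2 / 3 * (2 * x - 1) ^ 3) ^ 2
            = 4 * (1 - 2 * x) ^ 2 + 8 / 3 * (1 - 2 * x) ^ 4 + 4 / 9 * (1 - 2 * x) ^ 6 := by
          ring
        linarith
    have hkey : 1 - Q ^ 2 ≤ 2 * Q * (x * (1 - x)) *
        (4 * (1 - 2 * x) ^ 2 + 8 / 3 * (1 - 2 * x) ^ 4 + 4 / 9 * (1 - 2 * x) ^ 6) := by
      rw [hQdef]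
      exact poly_key x hx0 hx1
    have h2Q : (0 : ℝ) < 2 * Q := by linarith
    have hstep : (1 - Q ^ 2) / (2 * Q) ≤ x * (1 - x) * L ^ 2 := by
      rw [div_le_iff₀ h2Q]
      have hm : (0 : ℝ) ≤ 2 * Q * (x * (1 - x)) :=
        mul_nonneg (by linarith) hpw.le
      have hmul := mul_le_mul_of_nonneg_left hC hm
      linarith [hmul, hkey]
    have e : (Q ^ 2 - 1) / (2 * Q) = -((1 - Q ^ 2) / (2 * Q)) := by ring
    rw [e] at hB
    linarith
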